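/- Let 0 < β < α, ρ = √(α/β), and t > 0. Let M₋ and M₊ be i.i.d. random variables with -M₊ geometric on {0,1,…} with parameter β/α, and let H, A be independent Poisson random variables with means αt, βt, all four variables mutually independent. Then P(M₋ + H - A + M₊ ≤ 0) ≤ (1 + √(β/α))² exp(-(√α - √β)² t). -/

import Mathlib

open MeasureTheory ProbabilityTheory Real

lemma zdc_tsum_ofReal_mul_pow (p : ℕ → ℝ) (u : ℝ) (hp : ∀ k, 0 ≤ p k) (hu : 0 ≤ u)
    (hs : Summable fun k => p k * u ^ k) :
    ∑' k : ℕ, ENNReal.ofReal (p k) * ENNReal.ofReal u ^ k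
      = ENNReal.ofReal (∑' k : ℕ, p k * u ^ k) := by
  rw [ENNReal.ofReal_tsum_of_nonneg (fun k => mul_nonneg (hp k) (pow_nonneg hu k)) hs]
  congr 1; ext k
  rw [ENNReal.ofReal_mul (hp k), ENNReal.ofReal_pow hu]

lemma zdc_poisson_sum (m u : ℝ) (hu : 0 ≤ u) :
    ∑' k : ℕ, (Real.exp (-m) * m ^ k / k.factorial) * u ^ k = Real.exp (m * (u - 1)) := by
  have h1 : ∀ k : ℕ, (Real.exp (-m) * m ^ k / k.factorial) * u ^ k
      = Real.exp (-m) * ((m * u) ^ k / k.factorial) := by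
    intro k; rw [mul_pow]; ring
  simp_rw [h1]
  rw [tsum_mul_left]
  have h2 : ∑' k : ℕ, (m * u) ^ k / (k.factorial : ℝ) = Real.exp (m * u) := by
    rw [Real.exp_eq_exp_ℝ, NormedSpace.exp_eq_tsum_div]
  rw [h2, ← Real.exp_add]
  ring_nf

lemma zdc_poisson_summable (m u : ℝ) :
    Summable fun k : ℕ => (Real.exp (-m) * m ^ k / k.factorial) * u ^ k := by
  have h1 : ∀ k : ℕ, (Real.exp (-m) * m ^ k / k.factorial) * u ^ k
      = Real.exp (-m) * ((m * u) ^ k / k.factorial) := by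
    intro k; rw [mul_pow]; ring
  simp_rw [h1]
  exact (Real.summable_pow_div_factorial (m * u)).mul_left _

lemma zdc_geom_sum (s : ℝ) (hs0 : 0 < s) (hs1 : s < 1) :
    ∑' k : ℕ, ((1 - s ^ 2) * (s ^ 2) ^ k) * (s⁻¹) ^ k = 1 + s := by
  have h1 : ∀ k : ℕ, ((1 - s ^ 2) * (s ^ 2) ^ k) * (s⁻¹) ^ k = (1 - s ^ 2) * s ^ k := by
    intro k
    rw [mul_assoc, ← mul_pow]
    congr 2
    field_simp
  simp_rw [h1]
  rw [tsum_mul_left, tsum_geometric_of_lt_one hs0.le hs1]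
  have h2 : (1:ℝ) - s ≠ 0 := by linarith
  have h3 : (1:ℝ) - s ^ 2 = (1 + s) * (1 - s) := by ring
  rw [h3, mul_assoc, mul_inv_cancel₀ h2, mul_one]

lemma zdc_geom_summable (s : ℝ) (hs0 : 0 < s) (hs1 : s < 1) :
    Summable fun k : ℕ => ((1 - s ^ 2) * (s ^ 2) ^ k) * (s⁻¹) ^ k := by
  have h1 : ∀ k : ℕ, ((1 - s ^ 2) * (s ^ 2) ^ k) * (s⁻¹) ^ k = (1 - s ^ 2) * s ^ k := by
    intro k
    rw [mul_assoc, ← mul_pow]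
    congr 2
    field_simp
  simp_rw [h1]
  exact (summable_geometric_of_lt_one hs0.le hs1).mul_left _

lemma zdc_exponent (α β t : ℝ) (hβ : 0 < β) (hα : 0 < α) :
    α * t * (Real.sqrt (β / α) - 1) + β * t * ((Real.sqrt (β / α))⁻¹ - 1)
      = -(Real.sqrt α - Real.sqrt β) ^ 2 * t := by
  have hsa : Real.sqrt α ^ 2 = α := Real.sq_sqrt hα.le
  have hsb : Real.sqrt β ^ 2 = β := Real.sq_sqrt hβ.le
  have hsa0 : 0 < Real.sqrt α := Real.sqrt_pos.mpr hα
  have hsb0 : 0 < Real.sqrt β := Real.sqrt_pos.mpr hβ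
  have hdiv : Real.sqrt (β / α) = Real.sqrt β / Real.sqrt α := Real.sqrt_div hβ.le α
  rw [hdiv, inv_div]
  have e1 : α * (Real.sqrt β / Real.sqrt α) = Real.sqrt α * Real.sqrt β := by
    rw [mul_comm, div_mul_eq_mul_div, div_eq_iff hsa0.ne']
    linear_combination (-Real.sqrt β) * hsa
  have e2 : β * (Real.sqrt α / Real.sqrt β) = Real.sqrt α * Real.sqrt β := by
    rw [mul_comm, div_mul_eq_mul_div, div_eq_iff hsb0.ne']
    linear_combination (-Real.sqrt α) * hsb
  linear_combination t * e1 + t * e2 + t * hsa + t * hsb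


/-- Chernoff bound for the zero-delay race.  With `G₁ = -M₋`, `G₂ = -M₊`
i.i.d. geometric with parameter `β/α`, and `H ~ Poisson(αt)`, `A ~ Poisson(βt)`, all
mutually independent,
`P(M₋ + H - A + M₊ ≤ 0) ≤ (1 + √(β/α))² exp(-(√α - √β)² t)`. -/
theorem zero_delay_chernoff {Ω : Type*} [MeasureSpace Ω]
    [IsProbabilityMeasure (ℙ : Measure Ω)]
    (α β t : ℝ) (hβ : 0 < β) (hβα : β < α) (ht : 0 < t)
    (H A G₁ G₂ : Ω → ℕ)
    (hHm : Measurable H) (hAm : Measurable A) (hG₁m : Measurable G₁) (hG₂m : Measurable G₂)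
    (hind : iIndepFun ![H, A, G₁, G₂] ℙ)
    (hH : ∀ k : ℕ, ℙ {ω | H ω = k} = ENNReal.ofReal (exp (-(α * t)) * (α * t) ^ k / k.factorial))
    (hA : ∀ k : ℕ, ℙ {ω | A ω = k} = ENNReal.ofReal (exp (-(β * t)) * (β * t) ^ k / k.factorial))
    (hG₁ : ∀ k : ℕ, ℙ {ω | G₁ ω = k} = ENNReal.ofReal ((1 - β / α) * (β / α) ^ k))
    (hG₂ : ∀ k : ℕ, ℙ {ω | G₂ ω = k} = ENNReal.ofReal ((1 - β / α) * (β / α) ^ k)) :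
    (ℙ {ω | -(G₁ ω : ℤ) + H ω - A ω + -(G₂ ω : ℤ) ≤ 0}).toReal ≤
      (1 + Real.sqrt (β / α)) ^ 2 * exp (-(Real.sqrt α - Real.sqrt β) ^ 2 * t) := by
  have hα : 0 < α := hβ.trans hβα
  set s := Real.sqrt (β / α) with hs_def
  have hq0 : 0 < β / α := div_pos hβ hα
  have hq1 : β / α < 1 := (div_lt_one hα).mpr hβα
  have hs0 : 0 < s := Real.sqrt_pos.mpr hq0
  have hs1 : s < 1 := by
    rw [hs_def, show (1 : ℝ) = Real.sqrt 1 from Real.sqrt_one.symm]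
    exact Real.sqrt_lt_sqrt hq0.le hq1
  have hsq : s ^ 2 = β / α := Real.sq_sqrt hq0.le
  have hsinv1 : 1 ≤ s⁻¹ := (one_le_inv₀ hs0).2 hs1.le
  -- event rewriting
  have hEset : {ω | -(G₁ ω : ℤ) + H ω - A ω + -(G₂ ω : ℤ) ≤ 0}
      = {ω | H ω ≤ A ω + G₁ ω + G₂ ω} := by
    ext ω; simp only [Set.mem_setOf_eq]; omega
  -- atoms
  set Atom : ℕ × ℕ × ℕ × ℕ → Set Ω := fun x =>
    {ω | H ω = x.1 ∧ A ω = x.2.1 ∧ G₁ ω = x.2.2.1 ∧ G₂ ω = x.2.2.2} with hAtom_def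
  have hAtomMeas : ∀ x, MeasurableSet (Atom x) := by
    intro x
    exact (hHm (measurableSet_singleton x.1)).inter ((hAm (measurableSet_singleton x.2.1)).inter
      ((hG₁m (measurableSet_singleton x.2.2.1)).inter (hG₂m (measurableSet_singleton x.2.2.2))))
  have hAtomP : ∀ x : ℕ × ℕ × ℕ × ℕ, ℙ (Atom x)
      = ℙ {ω | H ω = x.1} * ℙ {ω | A ω = x.2.1} * ℙ {ω | G₁ ω = x.2.2.1}
        * ℙ {ω | G₂ ω = x.2.2.2} := by
    rintro ⟨h, a, g₁, g₂⟩
    have key := hind.measure_inter_preimage_eq_mul (S := Finset.univ)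
      (sets := fun i => {(![h, a, g₁, g₂] : Fin 4 → ℕ) i}) (fun i _ => measurableSet_singleton _)
    have hset : (⋂ i ∈ Finset.univ, (![H, A, G₁, G₂] i) ⁻¹' {(![h, a, g₁, g₂] : Fin 4 → ℕ) i})
        = Atom (h, a, g₁, g₂) := by
      ext ω
      simp only [hAtom_def, Set.mem_iInter, Finset.mem_univ, Set.mem_preimage,
        Set.mem_singleton_iff, Set.mem_setOf_eq, forall_true_left]
      constructor
      · intro hall
        exact ⟨hall 0, hall 1, hall 2, hall 3⟩
      · rintro ⟨h1, h2, h3, h4⟩ i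
        fin_cases i <;> simpa
    rw [hset, Fin.prod_univ_four] at key
    simp at key
    exact key
  -- decomposition pieces
  set D : ℕ × ℕ × ℕ × ℕ → Set Ω := fun x =>
    if x.1 ≤ x.2.1 + x.2.2.1 + x.2.2.2 then Atom x else ∅ with hD_def
  have hDsub : ∀ x, D x ⊆ Atom x := by
    intro x; rw [hD_def]; dsimp only; split
    · exact subset_rfl
    · exact Set.empty_subset _
  have hDmeas : ∀ x, MeasurableSet (D x) := by
    intro x; rw [hD_def]; dsimp only; split
    · exact hAtomMeas x
    · exact MeasurableSet.empty
  have hDdisj : Pairwise (Function.onFun Disjoint D) := by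
    intro x y hxy
    refine Set.disjoint_left.mpr fun ω hx hy => hxy ?_
    have h1 := hDsub x hx
    have h2 := hDsub y hy
    simp only [hAtom_def, Set.mem_setOf_eq] at h1 h2
    obtain ⟨a1, a2, a3, a4⟩ := h1
    obtain ⟨b1, b2, b3, b4⟩ := h2
    ext <;> simp_all
  have hEunion : {ω | H ω ≤ A ω + G₁ ω + G₂ ω} = ⋃ x, D x := by
    ext ω
    simp only [Set.mem_setOf_eq, Set.mem_iUnion]
    constructor
    · intro hω
      refine ⟨(H ω, A ω, G₁ ω, G₂ ω), ?_⟩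
      rw [hD_def]
      simp only [if_pos hω]
      simp [hAtom_def]
    · rintro ⟨x, hx⟩
      rw [hD_def] at hx
      dsimp only at hx
      split at hx
      · rename_i hc
        have := hx
        simp only [hAtom_def, Set.mem_setOf_eq] at this
        omega
      · exact absurd hx (Set.notMem_empty ω)
  -- the weights
  set wH : ENNReal := ENNReal.ofReal s with hwH
  set wA : ENNReal := ENNReal.ofReal s⁻¹ with hwA
  have hwmul : wH * wA = 1 := by
    rw [hwH, hwA, ← ENNReal.ofReal_mul hs0.le, mul_inv_cancel₀ hs0.ne', ENNReal.ofReal_one]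
  have hwA1 : 1 ≤ wA := by
    rw [hwA, ← ENNReal.ofReal_one]
    exact ENNReal.ofReal_le_ofReal hsinv1
  have hwgt : ∀ x : ℕ × ℕ × ℕ × ℕ, ℙ (D x)
      ≤ (wH ^ x.1 * ℙ {ω | H ω = x.1}) * ((wA ^ x.2.1 * ℙ {ω | A ω = x.2.1})
        * ((wA ^ x.2.2.1 * ℙ {ω | G₁ ω = x.2.2.1})
          * (wA ^ x.2.2.2 * ℙ {ω | G₂ ω = x.2.2.2}))) := by
    rintro ⟨h, a, g₁, g₂⟩
    rw [hD_def]
    dsimp only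
    split
    · rename_i hc
      rw [hAtomP (h, a, g₁, g₂)]
      dsimp only
      have h1le : (1 : ENNReal) ≤ wH ^ h * wA ^ (a + g₁ + g₂) := by
        obtain ⟨d, hd⟩ : ∃ d, a + g₁ + g₂ = h + d := ⟨a + g₁ + g₂ - h, by omega⟩
        rw [hd, pow_add, ← mul_assoc, ← mul_pow, hwmul, one_pow, one_mul]
        exact one_le_pow_of_one_le' hwA1 d
      calc ℙ {ω | H ω = h} * ℙ {ω | A ω = a} * ℙ {ω | G₁ ω = g₁} * ℙ {ω | G₂ ω = g₂}
          = 1 * (ℙ {ω | H ω = h} * ℙ {ω | A ω = a} * ℙ {ω | G₁ ω = g₁} * ℙ {ω | G₂ ω = g₂}) := by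
            rw [one_mul]
        _ ≤ (wH ^ h * wA ^ (a + g₁ + g₂))
            * (ℙ {ω | H ω = h} * ℙ {ω | A ω = a} * ℙ {ω | G₁ ω = g₁} * ℙ {ω | G₂ ω = g₂}) :=
          mul_le_mul_left h1le _
        _ = (wH ^ h * ℙ {ω | H ω = h}) * ((wA ^ a * ℙ {ω | A ω = a})
            * ((wA ^ g₁ * ℙ {ω | G₁ ω = g₁}) * (wA ^ g₂ * ℙ {ω | G₂ ω = g₂}))) := by
          rw [pow_add, pow_add]; ring
    · simp
  -- sum bound
  have hsum : ℙ {ω | H ω ≤ A ω + G₁ ω + G₂ ω}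
      ≤ (∑' k : ℕ, wH ^ k * ℙ {ω | H ω = k}) * ((∑' k : ℕ, wA ^ k * ℙ {ω | A ω = k})
        * ((∑' k : ℕ, wA ^ k * ℙ {ω | G₁ ω = k}) * (∑' k : ℕ, wA ^ k * ℙ {ω | G₂ ω = k}))) := by
    rw [hEunion, measure_iUnion hDdisj hDmeas]
    calc ∑' x, ℙ (D x) ≤ ∑' x : ℕ × ℕ × ℕ × ℕ,
        (wH ^ x.1 * ℙ {ω | H ω = x.1}) * ((wA ^ x.2.1 * ℙ {ω | A ω = x.2.1})
          * ((wA ^ x.2.2.1 * ℙ {ω | G₁ ω = x.2.2.1})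
            * (wA ^ x.2.2.2 * ℙ {ω | G₂ ω = x.2.2.2}))) := ENNReal.tsum_le_tsum hwgt
      _ = _ := by
        rw [ENNReal.tsum_prod']
        simp only [ENNReal.tsum_mul_left]
        congr 1
        congr 1
        rw [ENNReal.tsum_prod']
        simp only [ENNReal.tsum_mul_left]
        congr 1
        congr 1
        rw [ENNReal.tsum_prod']
        simp only [ENNReal.tsum_mul_left]
        simp only [ENNReal.tsum_mul_right]
  -- evaluate the series
  have hSH : (∑' k : ℕ, wH ^ k * ℙ {ω | H ω = k})
      = ENNReal.ofReal (exp (α * t * (s - 1))) := by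
    have hcomm : ∀ k : ℕ, wH ^ k * ℙ {ω | H ω = k}
        = ENNReal.ofReal (exp (-(α * t)) * (α * t) ^ k / k.factorial)
          * ENNReal.ofReal s ^ k := fun k => by rw [hH, hwH, mul_comm]
    rw [tsum_congr hcomm, zdc_tsum_ofReal_mul_pow _ _ (fun k => by positivity) hs0.le
      (zdc_poisson_summable (α * t) s), zdc_poisson_sum (α * t) s hs0.le]
  have hSA : (∑' k : ℕ, wA ^ k * ℙ {ω | A ω = k})
      = ENNReal.ofReal (exp (β * t * (s⁻¹ - 1))) := by
    have hcomm : ∀ k : ℕ, wA ^ k * ℙ {ω | A ω = k}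
        = ENNReal.ofReal (exp (-(β * t)) * (β * t) ^ k / k.factorial)
          * ENNReal.ofReal s⁻¹ ^ k := fun k => by rw [hA, hwA, mul_comm]
    rw [tsum_congr hcomm, zdc_tsum_ofReal_mul_pow _ _ (fun k => by positivity)
      (inv_nonneg.mpr hs0.le) (zdc_poisson_summable (β * t) s⁻¹),
      zdc_poisson_sum (β * t) s⁻¹ (inv_nonneg.mpr hs0.le)]
  have hSG : ∀ G : Ω → ℕ,
      (∀ k : ℕ, ℙ {ω | G ω = k} = ENNReal.ofReal ((1 - β / α) * (β / α) ^ k)) →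
      (∑' k : ℕ, wA ^ k * ℙ {ω | G ω = k}) = ENNReal.ofReal (1 + s) := by
    intro G hG
    have hcomm : ∀ k : ℕ, wA ^ k * ℙ {ω | G ω = k}
        = ENNReal.ofReal ((1 - s ^ 2) * (s ^ 2) ^ k) * ENNReal.ofReal s⁻¹ ^ k := fun k => by
      rw [hG, hwA, mul_comm, hsq]
    rw [tsum_congr hcomm, zdc_tsum_ofReal_mul_pow _ _
      (fun k => mul_nonneg (by nlinarith) (by positivity)) (inv_nonneg.mpr hs0.le)
      (zdc_geom_summable s hs0 hs1), zdc_geom_sum s hs0 hs1]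
  have hexp := zdc_exponent α β t hβ hα
  rw [← hs_def] at hexp
  have hfin : (∑' k : ℕ, wH ^ k * ℙ {ω | H ω = k}) * ((∑' k : ℕ, wA ^ k * ℙ {ω | A ω = k})
        * ((∑' k : ℕ, wA ^ k * ℙ {ω | G₁ ω = k}) * (∑' k : ℕ, wA ^ k * ℙ {ω | G₂ ω = k})))
      = ENNReal.ofReal ((1 + s) ^ 2 * exp (-(Real.sqrt α - Real.sqrt β) ^ 2 * t)) := by
    rw [hSH, hSA, hSG G₁ hG₁, hSG G₂ hG₂, ← ENNReal.ofReal_mul (by positivity),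
      ← ENNReal.ofReal_mul (by positivity), ← ENNReal.ofReal_mul (by positivity)]
    congr 1
    rw [show exp (α * t * (s - 1)) * (exp (β * t * (s⁻¹ - 1)) * ((1 + s) * (1 + s)))
        = (1 + s) ^ 2 * (exp (α * t * (s - 1)) * exp (β * t * (s⁻¹ - 1))) from by ring,
      ← Real.exp_add, hexp]
  rw [hEset]
  refine ENNReal.toReal_le_of_le_ofReal (by positivity) ?_
  calc ℙ {ω | H ω ≤ A ω + G₁ ω + G₂ ω} ≤ _ := hsum
    _ = _ := hfin
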